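/- Let G be a Polish group and let (H_x)_{x∈ℝ} be an analytic independent generating family of subgroups of G. Then only finitely many x ∈ ℝ satisfy that H_x is uncountable. -/

import Mathlib

open Set Topology Filter

section BaireHull
variable {α : Type*} [TopologicalSpace α]

/-- The set of points near which `S` is nonmeager. -/
def baireD (S : Set α) : Set α := {x | ∀ U : Set α, IsOpen U → x ∈ U → ¬ IsMeagre (S ∩ U)}

lemma isClosed_baireD (S : Set α) : IsClosed (baireD S) := by
  rw [← isOpen_compl_iff, isOpen_iff_forall_mem_open]
  rintro x hx
  simp only [baireD, mem_compl_iff, mem_setOf_eq, not_forall] at hx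
  obtain ⟨U, hU, hxU, hm⟩ := hx
  simp only [not_not] at hm
  exact ⟨U, fun y hy hyD => hyD U hU hy hm, hU, hxU⟩

lemma baireD_subset_closure (S : Set α) : baireD S ⊆ closure S := by
  intro x hx
  rw [mem_closure_iff]
  intro U hU hxU
  rcases (S ∩ U).eq_empty_or_nonempty with h | h
  · exact absurd (h ▸ IsMeagre.empty) (hx U hU hxU)
  · obtain ⟨y, hy⟩ := h; exact ⟨y, hy.2, hy.1⟩

lemma isMeagre_diff_baireD [SecondCountableTopology α] (S : Set α) :
    IsMeagre (S \ baireD S) := by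
  classical
  obtain ⟨B, hBc, -, hB⟩ := TopologicalSpace.exists_countable_basis α
  have h : S \ baireD S ⊆ ⋃ b ∈ {b ∈ B | IsMeagre (S ∩ b)}, (S ∩ b) := by
    intro x hx
    obtain ⟨U, hU, hxU, hm⟩ : ∃ U, IsOpen U ∧ x ∈ U ∧ IsMeagre (S ∩ U) := by
      have := hx.2
      simp only [baireD, mem_setOf_eq, not_forall, not_not] at this
      obtain ⟨U, hU, hxU, hm⟩ := this; exact ⟨U, hU, hxU, hm⟩
    obtain ⟨b, hbB, hxb, hbU⟩ := hB.mem_nhds_iff.1 (hU.mem_nhds hxU)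
    exact mem_biUnion ⟨hbB, hm.mono (inter_subset_inter_right _ hbU)⟩ ⟨hx.1, hxb⟩
  exact (isMeagre_biUnion (hBc.mono (sep_subset _ _))
    (fun b hb => hb.2)).mono h

/-- The Baire "hull" of a set. -/
def baireHull (S : Set α) : Set α := S ∪ baireD S

lemma subset_baireHull (S : Set α) : S ⊆ baireHull S := subset_union_left

lemma baireHull_subset_closure (S : Set α) : baireHull S ⊆ closure S :=
  union_subset subset_closure (baireD_subset_closure S)

lemma baireMeasurableSet_baireHull [SecondCountableTopology α] (S : Set α) :
    BaireMeasurableSet (baireHull S) := by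
  have : baireHull S = baireD S ∪ (S \ baireD S) := by
    simp [baireHull, union_comm, union_diff_self]
  rw [this]
  exact (BaireMeasurableSet.of_compl
    (isClosed_baireD S).isOpen_compl.baireMeasurableSet).union
    (isMeagre_diff_baireD S).baireMeasurableSet

lemma IsOpen.not_isMeagre_of_nonempty [BaireSpace α] {V : Set α} (hV : IsOpen V)
    (hne : V.Nonempty) : ¬ IsMeagre V := by
  intro h
  obtain ⟨x, hx, hx'⟩ := (dense_of_mem_residual h).exists_mem_open hV hne
  exact hx hx'

/-- If a set is nonmeager and Baire measurable, it is comeager in some nonempty open set. -/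
lemma exists_isOpen_nonempty_diff_isMeagre [BaireSpace α] {E : Set α}
    (hE : BaireMeasurableSet E) (hnm : ¬ IsMeagre E) :
    ∃ V : Set α, IsOpen V ∧ V.Nonempty ∧ IsMeagre (V \ E) := by
  obtain ⟨U, hU, hEU⟩ := hE.residualEq_isOpen
  have hM : IsMeagre {x | ¬ ((x ∈ E) = (x ∈ U))} := by
    have hc : {x | ¬((x ∈ E) = (x ∈ U))}ᶜ = {x | (x ∈ E) = (x ∈ U)} := by
      ext x; simp
    rw [IsMeagre, hc]
    exact hEU
  rcases U.eq_empty_or_nonempty with rfl | hne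
  · exact absurd (hM.mono (fun x hx => by simpa using hx)) hnm
  · refine ⟨U, hU, hne, hM.mono ?_⟩
    intro x hx
    simp only [mem_setOf_eq]
    intro h
    exact hx.2 (h ▸ hx.1)

/-- Minimality of the Baire hull: the hull exceeds any Baire measurable superset
only by a meager set. -/
lemma isMeagre_baireHull_diff [SecondCountableTopology α] [BaireSpace α] {S Z : Set α}
    (hSZ : S ⊆ Z) (hZ : BaireMeasurableSet Z) : IsMeagre (baireHull S \ Z) := by
  have hsub : baireHull S \ Z ⊆ baireD S \ Z := by
    rintro x ⟨hx, hxZ⟩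
    exact ⟨hx.elim (fun h => absurd (hSZ h) hxZ) id, hxZ⟩
  set E := baireD S \ Z with hE
  by_cases hnm : IsMeagre E
  · exact hnm.mono hsub
  · exfalso
    have hEbm : BaireMeasurableSet E :=
      (BaireMeasurableSet.of_compl (isClosed_baireD S).isOpen_compl.baireMeasurableSet).diff hZ
    obtain ⟨V, hV, hVne, hVm⟩ := exists_isOpen_nonempty_diff_isMeagre hEbm hnm
    have hVE : (V ∩ E).Nonempty := by
      rcases (V ∩ E).eq_empty_or_nonempty with h | h
      · exact absurd (hVm.mono (show V ⊆ V \ E from fun x hx => ⟨hx, fun hxE =>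
          (eq_empty_iff_forall_notMem.1 h x) ⟨hx, hxE⟩⟩)) (hV.not_isMeagre_of_nonempty hVne)
      · exact h
    obtain ⟨x, hxV, hxE⟩ := hVE
    refine hxE.1 V hV hxV (hVm.mono ?_)
    intro y ⟨hyS, hyV⟩
    exact ⟨hyV, fun hyE => hyE.2 (hSZ hyS)⟩

end BaireHull
open Set Topology Filter MeasureTheory

section cyl

/-- The cylinder of sequences extending the finite sequence `s`. -/
def cylSet (s : List ℕ) : Set (ℕ → ℕ) := {x | ∀ i, i < s.length → x i = s.getD i 0}

lemma cylSet_nil : cylSet [] = univ := by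
  ext x; simp [cylSet]

lemma cylSet_eq_iUnion (s : List ℕ) : cylSet s = ⋃ n, cylSet (s ++ [n]) := by
  ext x
  simp only [mem_iUnion]
  constructor
  · intro hx
    refine ⟨x s.length, fun i hi => ?_⟩
    rcases lt_or_eq_of_le (Nat.lt_succ_iff.1 (by simpa using hi)) with h | h
    · rw [List.getD_append _ _ _ _ h]
      exact hx i h
    · subst h
      rw [List.getD_append_right _ _ _ _ le_rfl]
      simp
  · rintro ⟨n, hn⟩ i hi
    rw [← List.getD_append s [n] 0 i hi]
    exact hn i (by simp; omega)

lemma cylSet_mono {s l : List ℕ} {x : ℕ → ℕ} (hx : x ∈ cylSet (s ++ l)) : x ∈ cylSet s := by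
  intro i hi
  rw [← List.getD_append s l 0 i hi]
  exact hx i (by simp; omega)

/-- Cylinders around `y` are a neighborhood basis: any neighborhood of `y` contains
the set of sequences agreeing with `y` up to some `n`. -/
lemma exists_cyl_subset {y : ℕ → ℕ} {V : Set (ℕ → ℕ)} (hV : V ∈ 𝓝 y) :
    ∃ n : ℕ, {z : ℕ → ℕ | ∀ i, i < n → z i = y i} ⊆ V := by
  rw [nhds_pi, Filter.mem_pi] at hV
  obtain ⟨I, hIfin, t, ht, hsub⟩ := hV
  obtain ⟨n, hn⟩ := hIfin.bddAbove
  refine ⟨n + 1, fun z hz => hsub fun i hi => ?_⟩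
  have : z i = y i := hz i (Nat.lt_succ_of_le (hn hi))
  rw [this]
  have := ht i
  rwa [nhds_discrete, mem_pure] at this

end cyl

section AnalyticBP
variable {α : Type*} [TopologicalSpace α] [PolishSpace α]

theorem MeasureTheory.AnalyticSet.baireMeasurableSet {A : Set α} (hA : AnalyticSet A) :
    BaireMeasurableSet A := by
  classical
  rw [AnalyticSet] at hA
  rcases hA with rfl | ⟨f, hf, rfl⟩
  · exact IsMeagre.empty.baireMeasurableSet
  letI := TopologicalSpace.upgradeIsCompletelyMetrizable α
  set B : List ℕ → Set α := fun s => baireHull (f '' cylSet s) with hBdef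
  have hBsub : ∀ s, B s ⊆ closure (f '' cylSet s) := fun s => baireHull_subset_closure _
  have hcover : ∀ s : List ℕ, f '' cylSet s ⊆ ⋃ n, B (s ++ [n]) := by
    intro s
    rw [cylSet_eq_iUnion s, image_iUnion]
    exact iUnion_mono fun n => subset_baireHull _
  have hBbm : ∀ s, BaireMeasurableSet (B s) := fun s => baireMeasurableSet_baireHull _
  have hmeag : ∀ s : List ℕ, IsMeagre (B s \ ⋃ n, B (s ++ [n])) := fun s =>
    isMeagre_baireHull_diff (hcover s) (BaireMeasurableSet.iUnion fun n => hBbm _)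
  set M : Set α := ⋃ s : List ℕ, (B s \ ⋃ n, B (s ++ [n])) with hMdef
  have hMmeag : IsMeagre M := by
    rw [IsMeagre, hMdef, compl_iUnion]
    exact countable_iInter_mem.mpr fun s => hmeag s
  have key : B [] \ M ⊆ range f := by
    rintro x ⟨hx0, hxM⟩
    have step : ∀ s : List ℕ, x ∈ B s → ∃ n, x ∈ B (s ++ [n]) := by
      intro s hs
      by_contra h
      push_neg at h
      exact hxM (mem_iUnion.2 ⟨s, hs, by simpa using h⟩)
    let T : ℕ → {s : List ℕ // x ∈ B s} := fun n => Nat.rec ⟨[], hx0⟩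
      (fun _ p => ⟨p.1 ++ [Classical.choose (step p.1 p.2)],
        Classical.choose_spec (step p.1 p.2)⟩) n
    have hTsucc : ∀ n, ∃ a, (T (n + 1)).1 = (T n).1 ++ [a] := fun n => ⟨_, rfl⟩
    have hTlen : ∀ n, (T n).1.length = n := by
      intro n
      induction n with
      | zero => rfl
      | succ n ih =>
        obtain ⟨a, ha⟩ := hTsucc n
        simp [ha, ih]
    have hTmono : ∀ m n, m ≤ n → ∃ l, (T n).1 = (T m).1 ++ l := by
      intro m n hmn
      induction n with
      | zero =>
        have hm0 : m = 0 := Nat.le_zero.1 hmn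
        subst hm0
        exact ⟨[], by simp⟩
      | succ n ih =>
        rcases Nat.lt_succ_iff_lt_or_eq.1 (Nat.lt_succ_of_le hmn) with h | h
        · obtain ⟨l, hl⟩ := ih (Nat.lt_succ_iff.1 h)
          obtain ⟨a, ha⟩ := hTsucc n
          exact ⟨l ++ [a], by rw [ha, hl, List.append_assoc]⟩
        · subst h
          exact ⟨[], by simp⟩
    set y : ℕ → ℕ := fun i => (T (i + 1)).1.getD i 0 with hydef
    have hyc : ∀ n, y ∈ cylSet (T n).1 := by
      intro n i hi
      rw [hTlen n] at hi
      obtain ⟨l, hl⟩ := hTmono (i + 1) n hi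
      rw [hl, List.getD_append _ _ _ _ ((hTlen (i + 1)).symm ▸ Nat.lt_succ_self i)]
    have hxy : x = f y := by
      by_contra hne
      have hd : 0 < dist x (f y) := dist_pos.2 hne
      set ε := dist x (f y) / 2 with hεdef
      have hε : 0 < ε := by positivity
      have hcont : f ⁻¹' Metric.ball (f y) ε ∈ 𝓝 y :=
        hf.continuousAt.preimage_mem_nhds (Metric.ball_mem_nhds _ hε)
      obtain ⟨n, hn⟩ := exists_cyl_subset hcont
      have himg : f '' cylSet (T n).1 ⊆ Metric.ball (f y) ε := by
        rintro - ⟨z, hz, rfl⟩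
        refine hn fun i hi => ?_
        have h1 := hz i (by rw [hTlen]; exact hi)
        have h2 := hyc n i (by rw [hTlen]; exact hi)
        rw [h1, ← h2]
      have hle : dist x (f y) ≤ ε := by
        have h1 : x ∈ closure (f '' cylSet (T n).1) := hBsub _ (T n).2
        have h2 := (closure_mono himg) h1
        have h3 := Metric.closure_ball_subset_closedBall h2
        simpa [Metric.mem_closedBall] using h3
      rw [hεdef] at hle
      linarith
    exact ⟨y, hxy.symm⟩
  have hsub1 : range f ⊆ B [] := by
    rw [← image_univ, ← cylSet_nil]
    exact subset_baireHull _
  have hdecomp : range f = (B [] \ M) ∪ (range f ∩ M) := by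
    apply Subset.antisymm
    · intro g hg
      by_cases hgM : g ∈ M
      · exact Or.inr ⟨hg, hgM⟩
      · exact Or.inl ⟨hsub1 hg, hgM⟩
    · rintro g (hg | hg)
      · exact key hg
      · exact hg.1
  rw [hdecomp]
  exact ((hBbm []).diff hMmeag.baireMeasurableSet).union
    (hMmeag.mono inter_subset_right).baireMeasurableSet

end AnalyticBP

section Pettis
open Pointwise

variable {G : Type*} [Group G] [TopologicalSpace G] [IsTopologicalGroup G]

lemma IsMeagre.image_mulLeft {s : Set G} (hs : IsMeagre s) (g : G) :
    IsMeagre ((g * ·) '' s) := by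
  have h := Homeomorph.mulLeft g
  have himg : (g * ·) '' s = (Homeomorph.mulLeft g).symm ⁻¹' s := by
    rw [Homeomorph.preimage_symm]
    rfl
  rw [himg]
  exact hs.preimage_of_isOpenMap (Homeomorph.mulLeft g).symm.continuous
    (Homeomorph.mulLeft g).symm.isOpenMap

lemma IsMeagre.union' {s t : Set G} (hs : IsMeagre s) (ht : IsMeagre t) :
    IsMeagre (s ∪ t) := by
  rw [IsMeagre, compl_union]
  exact Filter.inter_mem hs ht

/-- Pettis' theorem: a nonmeager Baire measurable set `A` in a topological group
satisfies that `A * A⁻¹` is a neighborhood of `1`. -/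
theorem pettis [BaireSpace G] {A : Set G} (hA : BaireMeasurableSet A)
    (hnm : ¬ IsMeagre A) : A * A⁻¹ ∈ 𝓝 (1 : G) := by
  obtain ⟨U, hU, hEU⟩ := hA.residualEq_isOpen
  have hM : IsMeagre {x | ¬ ((x ∈ A) = (x ∈ U))} := by
    have hc : {x | ¬((x ∈ A) = (x ∈ U))}ᶜ = {x | (x ∈ A) = (x ∈ U)} := by ext x; simp
    rw [IsMeagre, hc]
    exact hEU
  have hUA : IsMeagre (U \ A) := hM.mono (by
    rintro x ⟨hxU, hxA⟩
    simp only [mem_setOf_eq]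
    intro h
    exact hxA (h ▸ hxU))
  have hne : U.Nonempty := by
    rcases U.eq_empty_or_nonempty with rfl | h
    · refine absurd (hM.mono ?_) hnm
      intro x hx
      simp only [mem_setOf_eq]
      intro h
      exact absurd (h ▸ hx) (notMem_empty x)
    · exact h
  obtain ⟨u, hu⟩ := hne
  have hopen : IsOpen (U * U⁻¹) := hU.mul_right
  have h1 : (1 : G) ∈ U * U⁻¹ := by
    rw [← mul_inv_cancel u]
    exact Set.mul_mem_mul hu (Set.inv_mem_inv.2 hu)
  refine Filter.mem_of_superset (hopen.mem_nhds h1) ?_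
  rintro g ⟨a, ha, b, hb, rfl⟩
  rw [Set.mem_inv] at hb
  have haV : a ∈ U ∩ (fun x => (a * b) * x) '' U := ⟨ha, b⁻¹, hb, by group⟩
  have hVopen : IsOpen (U ∩ (fun x => (a * b) * x) '' U) :=
    hU.inter ((Homeomorph.mulLeft (a * b)).isOpenMap U hU)
  have hVnm : ¬ IsMeagre (U ∩ (fun x => (a * b) * x) '' U) :=
    hVopen.not_isMeagre_of_nonempty ⟨a, haV⟩
  have hAA : (A ∩ (fun x => (a * b) * x) '' A).Nonempty := by
    by_contra hemp
    rw [not_nonempty_iff_eq_empty] at hemp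
    refine hVnm ((hUA.union' (hUA.image_mulLeft (a * b))).mono ?_)
    rintro x ⟨hxU, w, hwU, hwx⟩
    by_cases hxA : x ∈ A
    · have hwA : w ∉ A := by
        intro hwA
        exact (eq_empty_iff_forall_notMem.1 hemp x) ⟨hxA, w, hwA, hwx⟩
      exact Or.inr ⟨w, ⟨hwU, hwA⟩, hwx⟩
    · exact Or.inl ⟨hxU, hxA⟩
  obtain ⟨x, hxA, w, hwA, hwx⟩ := hAA
  refine ⟨x, hxA, w⁻¹, Set.inv_mem_inv.2 hwA, ?_⟩
  rw [← hwx]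
  group

end Pettis

section GroupLemmas
open Pointwise
variable {G : Type*} [Group G] [TopologicalSpace G] [IsTopologicalGroup G]

/-- An uncountable subgroup of a second countable topological group contains
nontrivial elements in every neighborhood of the identity. -/
lemma exists_ne_one_mem_nhds [SecondCountableTopology G] {H : Subgroup G}
    (h : ¬ (H : Set G).Countable) {U : Set G} (hU : U ∈ 𝓝 (1 : G)) :
    ∃ g : G, g ∈ H ∧ g ∈ U ∧ g ≠ 1 := by
  classical
  by_contra hcon
  push_neg at hcon
  apply h
  obtain ⟨B, hBc, -, hB⟩ := TopologicalSpace.exists_countable_basis G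
  have hN : ∀ a : G, {b : G | a⁻¹ * b ∈ U} ∈ 𝓝 a := by
    intro a
    have hc : Continuous fun b : G => a⁻¹ * b := continuous_const.mul continuous_id
    have := hc.continuousAt (x := a)
    refine this.preimage_mem_nhds ?_
    simpa using hU
  have hex : ∀ a : G, ∃ b ∈ B, a ∈ b ∧ b ⊆ {c : G | a⁻¹ * c ∈ U} := fun a =>
    hB.mem_nhds_iff.1 (hN a)
  choose φ hφB hφmem hφsub using hex
  refine MapsTo.countable_of_injOn (fun a _ => hφB a) ?_ hBc
  intro a ha a' ha' hEq
  have ha'mem : a' ∈ φ a := hEq ▸ hφmem a'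
  have h1 : a⁻¹ * a' ∈ U := hφsub a ha'mem
  have h2 : a⁻¹ * a' ∈ H := H.mul_mem (H.inv_mem ha) ha'
  have := hcon _ h2 h1
  have : a' = a * 1 := by rw [← this]; group
  simpa using this.symm

lemma exists_nhds_list_prod (k : ℕ) {V : Set G} (hV : V ∈ 𝓝 (1 : G)) :
    ∃ U ∈ 𝓝 (1 : G), ∀ l : List G, l.length = k → (∀ z ∈ l, z ∈ U) → l.prod ∈ V := by
  induction k generalizing V with
  | zero =>
    refine ⟨V, hV, fun l hl _ => ?_⟩
    rw [List.length_eq_zero_iff.1 hl]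
    simpa using mem_of_mem_nhds hV
  | succ k ih =>
    obtain ⟨W, hW, hWmul⟩ := exists_nhds_one_split hV
    obtain ⟨U, hU, hUprod⟩ := ih hW
    refine ⟨U ∩ W, inter_mem hU hW, ?_⟩
    rintro (_ | ⟨z, l⟩) hl hmem
    · simp at hl
    · rw [List.prod_cons]
      refine hWmul z (hmem z List.mem_cons_self).2 _ (hUprod l (by simpa using hl)
        fun w hw => (hmem w (List.mem_cons_of_mem _ hw)).1)

end GroupLemmas

section AnalyticMul
open Pointwise MeasureTheory

lemma MeasureTheory.AnalyticSet.set_prod {α β : Type*} [TopologicalSpace α] [TopologicalSpace β]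
    {A : Set α} {B : Set β} (hA : AnalyticSet A) (hB : AnalyticSet B) :
    AnalyticSet (A ×ˢ B) := by
  rw [analyticSet_iff_exists_polishSpace_range] at hA hB ⊢
  obtain ⟨β₁, i₁, p₁, f, hf, rfl⟩ := hA
  obtain ⟨β₂, i₂, p₂, g, hg, rfl⟩ := hB
  exact ⟨β₁ × β₂, inferInstance, inferInstance, Prod.map f g, hf.prodMap hg,
    Set.range_prodMap⟩

lemma MeasureTheory.AnalyticSet.mul {G : Type*} [Group G] [TopologicalSpace G]
    [IsTopologicalGroup G] {A B : Set G} (hA : AnalyticSet A) (hB : AnalyticSet B) :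
    AnalyticSet (A * B) := by
  have himg : A * B = (fun p : G × G => p.1 * p.2) '' (A ×ˢ B) := by
    ext z
    simp only [Set.mem_mul, Set.mem_image, Set.mem_prod, Prod.exists]
    constructor
    · rintro ⟨a, ha, b, hb, rfl⟩; exact ⟨a, b, ⟨ha, hb⟩, rfl⟩
    · rintro ⟨a, b, ⟨ha, hb⟩, rfl⟩; exact ⟨a, ha, b, hb, rfl⟩
  rw [himg]
  exact (hA.set_prod hB).image_of_continuous continuous_mul

end AnalyticMul

open Pointwise MeasureTheory

theorem stmt_1 (G : Type*) [Group G] [TopologicalSpace G] [IsTopologicalGroup G]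
    [PolishSpace G] (H : ℝ → Subgroup G)
    (hanalytic : MeasureTheory.AnalyticSet {p : G × ℝ | p.1 ∈ H p.2})
    (hindep : ∀ (F : Finset ℝ) (x : ℝ), x ∉ F → H x ⊓ (⨆ y ∈ F, H y) = ⊥)
    (hgen : (⨆ x : ℝ, H x) = ⊤) :
    {x : ℝ | ¬ (H x : Set G).Countable}.Finite := by
  classical
  by_contra hinf
  have hTinf : {x : ℝ | ¬ (H x : Set G).Countable}.Infinite := hinf
  haveI : BaireSpace G := by
    letI := TopologicalSpace.upgradeIsCompletelyMetrizable G
    infer_instance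
  -- The union of all the subgroups
  set W : Set G := ⋃ x : ℝ, (H x : Set G) with hWdef
  have hWanal : AnalyticSet W := by
    have : W = Prod.fst '' {p : G × ℝ | p.1 ∈ H p.2} := by
      ext g
      simp only [hWdef, Set.mem_iUnion, Set.mem_image, Set.mem_setOf_eq, SetLike.mem_coe]
      constructor
      · rintro ⟨x, hx⟩; exact ⟨(g, x), hx, rfl⟩
      · rintro ⟨⟨g', x⟩, hx, rfl⟩; exact ⟨x, hx⟩
    rw [this]
    exact hanalytic.image_of_continuous continuous_fst
  have hWmem : ∀ {g : G} {x : ℝ}, g ∈ H x → g ∈ W := fun {g x} hg =>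
    Set.mem_iUnion.2 ⟨x, hg⟩
  have hWsymm : ∀ g ∈ W, g⁻¹ ∈ W := by
    rintro g hg
    obtain ⟨x, hx⟩ := Set.mem_iUnion.1 hg
    exact hWmem ((H x).inv_mem hx)
  -- powers of W
  have hWpow_symm : ∀ n : ℕ, ∀ g ∈ W ^ n, g⁻¹ ∈ W ^ n := by
    intro n
    induction n with
    | zero =>
      intro g hg
      rw [pow_zero] at hg ⊢
      rw [Set.mem_one] at hg ⊢
      rw [hg]; simp
    | succ n ih =>
      intro g hg
      rw [pow_succ] at hg
      obtain ⟨a, ha, b, hb, rfl⟩ := hg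
      rw [pow_succ']
      rw [mul_inv_rev]
      exact Set.mul_mem_mul (hWsymm b hb) (ih a ha)
  have hWpow_anal : ∀ n : ℕ, AnalyticSet (W ^ n) := by
    intro n
    induction n with
    | zero =>
      rw [pow_zero]
      have : (1 : Set G) = {(1 : G)} := rfl
      rw [this]
      exact isClosed_singleton.analyticSet
    | succ n ih =>
      rw [pow_succ]
      exact ih.mul hWanal
  -- every element is in some power of W
  have hcover : ∀ g : G, ∃ n : ℕ, g ∈ W ^ n := by
    intro g
    have hg : g ∈ (⊤ : Subgroup G) := trivial
    rw [← hgen, Subgroup.iSup_eq_closure] at hg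
    refine Subgroup.closure_induction ?_ ?_ ?_ ?_ hg
    · intro z hz
      exact ⟨1, by rwa [pow_one]⟩
    · exact ⟨0, by rw [pow_zero]; exact Set.mem_one.2 rfl⟩
    · rintro a b - - ⟨p, hp⟩ ⟨q, hq⟩
      exact ⟨p + q, by rw [pow_add]; exact Set.mul_mem_mul hp hq⟩
    · rintro a - ⟨p, hp⟩
      exact ⟨p, hWpow_symm p a hp⟩
  -- some power of W is nonmeager
  have hnm : ∃ n : ℕ, ¬ IsMeagre (W ^ n) := by
    by_contra hall
    push_neg at hall
    have huniv : (Set.univ : Set G) = ⋃ n : ℕ, W ^ n := by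
      ext g
      simp only [Set.mem_univ, Set.mem_iUnion, true_iff]
      exact hcover g
    have : IsMeagre (Set.univ : Set G) := huniv ▸ isMeagre_iUnion hall
    rw [IsMeagre, Set.compl_univ] at this
    exact absurd ((dense_of_mem_residual this).nonempty) (by simp)
  obtain ⟨n, hn⟩ := hnm
  -- Pettis
  have hV : W ^ (n + n) ∈ 𝓝 (1 : G) := by
    have hp := pettis (hWpow_anal n).baireMeasurableSet hn
    have hinv : (W ^ n)⁻¹ = W ^ n := by
      ext g
      rw [Set.mem_inv]
      exact ⟨fun h => by simpa using hWpow_symm n _ h, fun h => hWpow_symm n g h⟩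
    rwa [hinv, ← pow_add] at hp
  set m : ℕ := n + n with hmdef
  -- pick m+1 distinct reals with uncountable subgroups
  obtain ⟨t, htsub, htcard⟩ := hTinf.exists_subset_card_eq (m + 1)
  have hxlt : ∀ i : Fin (m + 1), True := fun _ => trivial
  let xo := t.orderIsoOfFin htcard
  set x : Fin (m + 1) → ℝ := fun i => (xo i : ℝ) with hxdef
  have hxinj : Function.Injective x := fun i j hij => by
    apply xo.injective
    exact Subtype.ext hij
  have hxT : ∀ i, ¬ ((H (x i) : Set G)).Countable := fun i =>
    htsub (xo i).2
  -- small neighborhood for products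
  obtain ⟨U, hU, hUprod⟩ := exists_nhds_list_prod (m + 1) hV
  -- pick nontrivial small elements
  have hgex : ∀ i : Fin (m + 1), ∃ g : G, g ∈ H (x i) ∧ g ∈ U ∧ g ≠ 1 := fun i =>
    exists_ne_one_mem_nhds (hxT i) hU
  choose g hgH hgU hgne using hgex
  have hllen : (List.ofFn g).length = m + 1 := by simp
  have hlmem : ∀ z ∈ List.ofFn g, z ∈ U := by
    intro z hz
    rw [List.mem_ofFn] at hz
    obtain ⟨i, rfl⟩ := hz
    exact hgU i
  have hpV : (List.ofFn g).prod ∈ W ^ m := hUprod _ hllen hlmem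
  -- decompose the product as m elements of W
  obtain ⟨φ, hφprod⟩ := Set.mem_pow.1 hpV
  have hyex : ∀ j : Fin m, ∃ y : ℝ, (φ j : G) ∈ H y := by
    intro j
    obtain ⟨y, hy⟩ := Set.mem_iUnion.1 (φ j).2
    exact ⟨y, hy⟩
  choose y hy using hyex
  set Tfin : Finset ℝ := Finset.image y Finset.univ with hTfdef
  have hTfcard : Tfin.card ≤ m := le_trans (Finset.card_image_le) (by simp)
  -- some x k avoids Tfin
  have hxk : ∃ k : Fin (m + 1), x k ∉ Tfin := by
    by_contra hcon
    push_neg at hcon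
    have hsub : Finset.image x Finset.univ ⊆ Tfin := by
      intro z hz
      rw [Finset.mem_image] at hz
      obtain ⟨i, -, rfl⟩ := hz
      exact hcon i
    have : m + 1 ≤ Tfin.card := by
      have := Finset.card_le_card hsub
      rwa [Finset.card_image_of_injective _ hxinj, Finset.card_univ, Fintype.card_fin] at this
    omega
  obtain ⟨k, hk⟩ := hxk
  set F : Finset ℝ := Tfin ∪ (Finset.image x Finset.univ).erase (x k) with hFdef
  have hkF : x k ∉ F := by
    rw [hFdef, Finset.mem_union]
    rintro (h | h)
    · exact hk h
    · exact (Finset.notMem_erase _ _) h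
  set J : Subgroup G := ⨆ y ∈ F, H y with hJdef
  have hHleJ : ∀ z : ℝ, z ∈ F → H z ≤ J := by
    intro z hz
    exact le_iSup₂ (f := fun (y : ℝ) (_ : y ∈ F) => H y) z hz
  have hyF : ∀ j : Fin m, y j ∈ F := by
    intro j
    rw [hFdef, Finset.mem_union]
    exact Or.inl (Finset.mem_image_of_mem y (Finset.mem_univ j))
  have hpJ : (List.ofFn g).prod ∈ J := by
    rw [← hφprod]
    refine Subgroup.list_prod_mem _ ?_
    intro z hz
    rw [List.mem_ofFn] at hz
    obtain ⟨j, rfl⟩ := hz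
    exact hHleJ (y j) (hyF j) (hy j)
  have hgiJ : ∀ i : Fin (m + 1), i ≠ k → g i ∈ J := by
    intro i hik
    refine hHleJ (x i) ?_ (hgH i)
    rw [hFdef, Finset.mem_union]
    refine Or.inr (Finset.mem_erase.2 ⟨fun h => hik (hxinj h), ?_⟩)
    exact Finset.mem_image_of_mem x (Finset.mem_univ i)
  -- split the product around position k
  have hk_lt : (k : ℕ) < (List.ofFn g).length := by rw [hllen]; exact k.isLt
  have hdropsplit : (List.ofFn g).drop (k : ℕ) = g k :: (List.ofFn g).drop ((k : ℕ) + 1) := by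
    rw [List.drop_eq_getElem_cons hk_lt]
    congr 1
    rw [List.getElem_ofFn]
  have hprod_split : (List.ofFn g).prod =
      ((List.ofFn g).take (k : ℕ)).prod * (g k * ((List.ofFn g).drop ((k : ℕ) + 1)).prod) := by
    conv_lhs => rw [← List.prod_take_mul_prod_drop (List.ofFn g) (k : ℕ)]
    rw [hdropsplit, List.prod_cons]
  have htakeJ : ((List.ofFn g).take (k : ℕ)).prod ∈ J := by
    refine Subgroup.list_prod_mem _ ?_
    intro z hz
    obtain ⟨j, hj, hjz⟩ := List.mem_iff_getElem.1 hz
    simp only [List.getElem_take, List.getElem_ofFn] at hjz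
    simp only [List.length_take, List.length_ofFn] at hj
    rw [← hjz]
    refine hgiJ _ fun hEq => ?_
    have h2 : j = (k : ℕ) := by simpa using congrArg Fin.val hEq
    omega
  have hdropJ : ((List.ofFn g).drop ((k : ℕ) + 1)).prod ∈ J := by
    refine Subgroup.list_prod_mem _ ?_
    intro z hz
    obtain ⟨j, hj, hjz⟩ := List.mem_iff_getElem.1 hz
    simp only [List.getElem_drop, List.getElem_ofFn] at hjz
    rw [← hjz]
    refine hgiJ _ fun hEq => ?_
    have h2 : (k : ℕ) + 1 + j = (k : ℕ) := by simpa using congrArg Fin.val hEq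
    omega
  have hgkJ : g k ∈ J := by
    have heq : g k = ((List.ofFn g).take (k : ℕ)).prod⁻¹ * (List.ofFn g).prod *
        ((List.ofFn g).drop ((k : ℕ) + 1)).prod⁻¹ := by
      rw [hprod_split]; group
    rw [heq]
    exact J.mul_mem (J.mul_mem (J.inv_mem htakeJ) hpJ) (J.inv_mem hdropJ)
  have hbot := hindep F (x k) hkF
  have hmem2 : g k ∈ H (x k) ⊓ J := ⟨hgH k, hgkJ⟩
  rw [hJdef] at hmem2
  rw [hbot] at hmem2
  exact hgne k (Subgroup.mem_bot.1 hmem2)
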